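/- For the step-down test the number of rejections computed with data-dependent critical values a_i = b_{m·F̂_m(p_{i:m})} depends only on comparisons at the inspection points j ∈ {m·F̂_m(p_{i:m}) : i = 1,…,m}; i.e., R = max{j : p_{i:m} ≤ a_i for all i ≤ j} equals max{j in the set of inspection points : p_{i:m} ≤ a_i for all i ≤ j}, even when tied p-values are present. -/

import Mathlib

open MeasureTheory ProbabilityTheory Finset
open scoped Classical
noncomputable section

/-- `#{i : p i ≤ t}`, i.e. `m·F̂_m(t)`. -/
def countLE {m : ℕ} (p : Fin m → ℝ) (t : ℝ) : ℕ :=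
  (Finset.univ.filter (fun i => p i ≤ t)).card

/-- The `i`-th order statistic `p_{i:m}` (for `1 ≤ i ≤ m`), characterized by
`p_{i:m} ≤ t ↔ i ≤ #{k : p k ≤ t}`. -/
def orderStat {m : ℕ} (p : Fin m → ℝ) (i : ℕ) : ℝ :=
  sInf {t | i ≤ countLE p t}

/-- Step-up rejection number `R = max {j : p_{j:m} ≤ α_j}` (`max ∅ = 0`). -/
def suR {m : ℕ} (α : ℕ → ℝ) (p : Fin m → ℝ) : ℕ :=
  (((Finset.range (m+1)).filter (fun j => 1 ≤ j ∧ orderStat p j ≤ α j)).max).unbotD 0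

/-- Step-down rejection number `R = max {j : p_{i:m} ≤ α_i for all i ≤ j}`. -/
def sdR {m : ℕ} (α : ℕ → ℝ) (p : Fin m → ℝ) : ℕ :=
  (((Finset.range (m+1)).filter
    (fun j => ∀ i ∈ Finset.Icc 1 j, orderStat p i ≤ α i)).max).unbotD 0

/-- FDR `= E[V / max(R,1)]` for rejection number `R` and rejection rule `rej`. -/
def FDR {Ω : Type*} [MeasurableSpace Ω] (μ : Measure Ω) {m : ℕ}
    (p : Ω → Fin m → ℝ) (I0 : Finset (Fin m))
    (R : (Fin m → ℝ) → ℕ) (rej : (Fin m → ℝ) → Fin m → Prop) : ℝ :=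
  ∫ ω, ((I0.filter (fun i => rej (p ω) i)).card : ℝ) / (max (R (p ω)) 1 : ℕ) ∂μ

/-- FDR of the step-up test with critical values `α`. -/
def suFDR {Ω : Type*} [MeasurableSpace Ω] (μ : Measure Ω) {m : ℕ}
    (α : ℕ → ℝ) (p : Ω → Fin m → ℝ) (I0 : Finset (Fin m)) : ℝ :=
  FDR μ p I0 (suR α) (fun q i => q i ≤ α (suR α q))

/-- FDR of the step-down test with critical values `α`
(rejecting the hypotheses belonging to `p_{i:m}`, `i ≤ R`). -/
def sdFDR {Ω : Type*} [MeasurableSpace Ω] (μ : Measure Ω) {m : ℕ}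
    (α : ℕ → ℝ) (p : Ω → Fin m → ℝ) (I0 : Finset (Fin m)) : ℝ :=
  FDR μ p I0 (sdR α) (fun q i => 1 ≤ sdR α q ∧ q i ≤ orderStat q (sdR α q))

/-- Benjamini–Hochberg critical values `b_j = jα/m`. -/
def bh (m : ℕ) (α : ℝ) (j : ℕ) : ℝ := j * α / m

/-- The uniform distribution on `[0,1]`. -/
def unif01 : Measure ℝ := volume.restrict (Set.Icc 0 1)

lemma countLE_mono {m : ℕ} (p : Fin m → ℝ) {s t : ℝ} (h : s ≤ t) :
    countLE p s ≤ countLE p t :=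
  Finset.card_le_card (Finset.monotone_filter_right _ (fun i _ hi => le_trans hi h))

lemma countLE_le {m : ℕ} (p : Fin m → ℝ) (t : ℝ) : countLE p t ≤ m := by
  simpa [countLE] using (Finset.card_filter_le Finset.univ (fun i => p i ≤ t)).trans_eq
    (by simp)

lemma countLE_one {m : ℕ} {p : Fin m → ℝ} (hp : ∀ i, p i ∈ Set.Icc (0:ℝ) 1) :
    countLE p 1 = m := by
  unfold countLE
  rw [Finset.filter_true_of_mem (fun k _ => (hp k).2)]
  simp

lemma exists_rep {m : ℕ} (p : Fin m → ℝ) {t : ℝ} (h : 1 ≤ countLE p t) :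
    ∃ k, p k ≤ t ∧ countLE p t ≤ countLE p (p k) := by
  have hne : (Finset.univ.filter (fun i => p i ≤ t)).Nonempty :=
    Finset.card_pos.mp h
  obtain ⟨k, hk, hmax⟩ := Finset.exists_max_image _ p hne
  simp only [Finset.mem_filter, Finset.mem_univ, true_and] at hk
  refine ⟨k, hk, Finset.card_le_card ?_⟩
  intro j hj
  simp only [Finset.mem_filter, Finset.mem_univ, true_and] at hj ⊢
  exact hmax j (by simpa using hj)

lemma S_bdd {m : ℕ} {p : Fin m → ℝ} (hp : ∀ i, p i ∈ Set.Icc (0:ℝ) 1) {i : ℕ}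
    (hi : 1 ≤ i) : BddBelow {t | i ≤ countLE p t} := by
  refine ⟨0, fun t ht => ?_⟩
  obtain ⟨k, hk, _⟩ := exists_rep p (le_trans hi ht)
  exact le_trans (hp k).1 hk

lemma S_nonempty {m : ℕ} {p : Fin m → ℝ} (hp : ∀ i, p i ∈ Set.Icc (0:ℝ) 1) {i : ℕ}
    (hi : i ≤ m) : (1:ℝ) ∈ {t | i ≤ countLE p t} := by
  simp only [Set.mem_setOf_eq, countLE_one hp]
  exact hi

lemma orderStat_spec {m : ℕ} {p : Fin m → ℝ} (hp : ∀ i, p i ∈ Set.Icc (0:ℝ) 1) {i : ℕ}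
    (h1 : 1 ≤ i) (h2 : i ≤ m) :
    ∃ k, orderStat p i = p k ∧ i ≤ countLE p (orderStat p i) := by
  classical
  set A : Finset ℝ :=
    (Finset.univ.filter (fun k => i ≤ countLE p (p k))).image p with hA
  have hAne : A.Nonempty := by
    have h1' : (1:ℕ) ≤ countLE p 1 := by rw [countLE_one hp]; omega
    obtain ⟨k, _, hk2⟩ := exists_rep p h1'
    refine ⟨p k, Finset.mem_image.mpr ⟨k, ?_, rfl⟩⟩
    simp only [Finset.mem_filter, Finset.mem_univ, true_and]
    rw [countLE_one hp] at hk2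
    omega
  obtain ⟨k, hkA, hkeq⟩ := Finset.mem_image.mp (A.min'_mem hAne)
  simp only [Finset.mem_filter, Finset.mem_univ, true_and] at hkA
  have hlb : ∀ t ∈ {t | i ≤ countLE p t}, A.min' hAne ≤ t := by
    intro t ht
    simp only [Set.mem_setOf_eq] at ht
    obtain ⟨k', hk'1, hk'2⟩ := exists_rep p (le_trans h1 ht)
    refine le_trans (Finset.min'_le _ _ ?_) hk'1
    exact Finset.mem_image.mpr ⟨k', by
      simp only [Finset.mem_filter, Finset.mem_univ, true_and]; omega, rfl⟩
  have heq : orderStat p i = A.min' hAne := by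
    refine le_antisymm ?_ ?_
    · exact csInf_le (S_bdd hp h1) (by simp only [Set.mem_setOf_eq, ← hkeq]; exact hkA)
    · exact le_csInf ⟨1, S_nonempty hp h2⟩ hlb
  refine ⟨k, by rw [heq, hkeq], ?_⟩
  rw [heq, ← hkeq]
  exact hkA

lemma orderStat_le_iff {m : ℕ} {p : Fin m → ℝ} (hp : ∀ i, p i ∈ Set.Icc (0:ℝ) 1) {i : ℕ}
    (h1 : 1 ≤ i) (h2 : i ≤ m) (t : ℝ) :
    orderStat p i ≤ t ↔ i ≤ countLE p t := by
  constructor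
  · intro h
    obtain ⟨k, _, hk2⟩ := orderStat_spec hp h1 h2
    exact le_trans hk2 (countLE_mono p h)
  · intro h
    exact csInf_le (S_bdd hp h1) h

lemma orderStat_mono {m : ℕ} {p : Fin m → ℝ} (hp : ∀ i, p i ∈ Set.Icc (0:ℝ) 1) {i j : ℕ}
    (h1 : 1 ≤ i) (h2 : i ≤ j) (h3 : j ≤ m) :
    orderStat p i ≤ orderStat p j := by
  refine csInf_le_csInf (S_bdd hp h1) ⟨1, S_nonempty hp h3⟩ ?_
  intro t ht
  simp only [Set.mem_setOf_eq] at ht ⊢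
  omega

lemma mem_le_max0 {s : Finset ℕ} {a : ℕ} (h : a ∈ s) : a ≤ s.max.unbotD 0 := by
  have h1 := Finset.le_max h
  obtain ⟨n, hn⟩ := Finset.max_of_mem h
  rw [hn] at h1 ⊢
  exact_mod_cast h1

lemma max0_mem {s : Finset ℕ} (h : s.max.unbotD 0 ≠ 0) : s.max.unbotD 0 ∈ s := by
  rcases hs : s.max with _ | n
  · rw [hs] at h
    exact absurd rfl h
  · exact Finset.mem_of_max hs

lemma aux_max (A B : Finset ℕ) (hsub : B ⊆ A)
    (h : ∀ j ∈ A, 1 ≤ j → ∃ k ∈ B, j ≤ k) :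
    A.max.unbotD 0 = B.max.unbotD 0 := by
  refine le_antisymm ?_ ?_
  · by_cases h0 : A.max.unbotD 0 = 0
    · rw [h0]; exact Nat.zero_le _
    · obtain ⟨k, hkB, hk⟩ := h _ (max0_mem h0) (Nat.one_le_iff_ne_zero.mpr h0)
      exact le_trans hk (mem_le_max0 hkB)
  · by_cases h0 : B.max.unbotD 0 = 0
    · rw [h0]; exact Nat.zero_le _
    · exact mem_le_max0 (hsub (max0_mem h0))

/-- For the step-down test with data-dependent critical values
`a_i = b_{m·F̂_m(p_{i:m})}` (with BH values `b_j = jα/m`), the rejection number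
only relies on the inspection points `j ∈ {m·F̂_m(p_{i:m}) : i = 1,…,m}`: the
maximum over all `j ≤ m` equals the maximum over the inspection points, even in
the presence of tied p-values. -/
theorem sd_data_dependent_inspection_points
    {m : ℕ} (hm : 1 ≤ m) (α : ℝ) (hα : α ∈ Set.Ioo (0:ℝ) 1)
    (p : Fin m → ℝ) (hp : ∀ i, p i ∈ Set.Icc (0:ℝ) 1) :
    (((Finset.range (m+1)).filter
        (fun j => ∀ i ∈ Finset.Icc 1 j,
          orderStat p i ≤ bh m α (countLE p (orderStat p i)))).max).unbotD 0
      =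
    (((Finset.univ.image (fun i : Fin m => countLE p (p i))).filter
        (fun j => ∀ i ∈ Finset.Icc 1 j,
          orderStat p i ≤ bh m α (countLE p (orderStat p i)))).max).unbotD 0 := by
  classical
  refine aux_max _ _ ?_ ?_
  · intro j hj
    simp only [Finset.mem_filter, Finset.mem_image, Finset.mem_range,
      Finset.mem_univ, true_and] at hj ⊢
    obtain ⟨⟨i, hi⟩, hPj⟩ := hj
    refine ⟨?_, hPj⟩
    have := countLE_le p (p i)
    omega
  · intro j hj hj1
    simp only [Finset.mem_filter, Finset.mem_range] at hj
    obtain ⟨hjm, hPj⟩ := hj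
    have hjm' : j ≤ m := by omega
    obtain ⟨k, hkeq, hkcount⟩ := orderStat_spec hp hj1 hjm'
    set J := countLE p (orderStat p j) with hJ
    have hJm : J ≤ m := countLE_le p _
    have hosEq : ∀ i, j ≤ i → i ≤ J → orderStat p i = orderStat p j := by
      intro i hji hiJ
      have hi1 : 1 ≤ i := le_trans hj1 hji
      have him : i ≤ m := le_trans hiJ hJm
      refine le_antisymm ?_ (orderStat_mono hp hj1 hji him)
      exact (orderStat_le_iff hp hi1 him _).mpr hiJ
    have hPJ : ∀ i ∈ Finset.Icc 1 J,
        orderStat p i ≤ bh m α (countLE p (orderStat p i)) := by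
      intro i hi
      simp only [Finset.mem_Icc] at hi
      by_cases hij : i ≤ j
      · exact hPj i (Finset.mem_Icc.mpr ⟨hi.1, hij⟩)
      · have h1 : orderStat p i = orderStat p j := hosEq i (by omega) hi.2
        rw [h1]
        exact hPj j (Finset.mem_Icc.mpr ⟨hj1, le_refl j⟩)
    refine ⟨J, ?_, hkcount⟩
    simp only [Finset.mem_filter, Finset.mem_image, Finset.mem_univ, true_and]
    exact ⟨⟨k, by rw [hJ, hkeq]⟩, hPJ⟩
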